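/- In a DAG D with vertex set V, let S ⊆ V and let V' = V \ S. If in a topological order of D every vertex of S precedes all of its descendants, then the truncated factorization ∏_{V_i ∈ V'} f(v_i | pa(v_i, D)) (with parent values in agreement with s) defines a valid probability density over V' for each fixed s, i.e., it is nonnegative and integrates to 1. -/

import Mathlib

lemma key_17 {ι α : Type*} [Fintype ι] [DecidableEq ι] [Fintype α] [DecidableEq α]
    (E : ι → ι → Prop)
    (q : ι → α → (ι → α) → ℝ)
    (hsum : ∀ i v, ∑ x : α, q i x v = 1)
    (hloc : ∀ i x v v', (∀ j, E j i → v j = v' j) → q i x v = q i x v')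
    (τ : ι → ℕ)
    (hτ : ∀ i j, E i j → τ i < τ j) :
    ∀ T : Finset ι, ∀ w : ι → α,
      (∑ v ∈ Finset.univ.filter (fun v : ι → α => ∀ i ∉ T, v i = w i),
        ∏ i ∈ T, q i (v i) v) = 1 := by
  intro T
  induction T using Finset.strongInduction with
  | _ T ih =>
    intro w
    rcases T.eq_empty_or_nonempty with rfl | hne
    · have : (Finset.univ.filter (fun v : ι → α => ∀ i ∉ (∅ : Finset ι), v i = w i)) = {w} := by
        ext v
        simp [Finset.mem_filter, funext_iff]
      rw [this]; simp
    · obtain ⟨i₀, hi₀T, hmax⟩ := T.exists_max_image τ hne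
      set T' := T.erase i₀ with hT'
      have hssub : T' ⊂ T := Finset.erase_ssubset hi₀T
      -- reindex
      have hre : (∑ v ∈ Finset.univ.filter (fun v : ι → α => ∀ i ∉ T, v i = w i),
            ∏ i ∈ T, q i (v i) v)
          = ∑ p ∈ (Finset.univ.filter (fun u : ι → α => ∀ i ∉ T', u i = w i)) ×ˢ
              (Finset.univ : Finset α),
              ∏ i ∈ T, q i ((Function.update p.1 i₀ p.2) i) (Function.update p.1 i₀ p.2) := by
        refine Finset.sum_nbij' (fun v => (Function.update v i₀ (w i₀), v i₀))
          (fun p => Function.update p.1 i₀ p.2) ?_ ?_ ?_ ?_ ?_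
        · intro v hv
          simp only [Finset.mem_filter, Finset.mem_univ, true_and] at hv
          refine Finset.mem_product.2 ⟨Finset.mem_filter.2 ⟨Finset.mem_univ _, ?_⟩, Finset.mem_univ _⟩
          intro i hi
          dsimp only
          by_cases h : i = i₀
          · subst h; simp
          · rw [Function.update_of_ne h]
            exact hv i (fun hiT => hi (Finset.mem_erase.2 ⟨h, hiT⟩))
        · intro p hp
          rw [Finset.mem_product] at hp
          have hp1 := (Finset.mem_filter.1 hp.1).2
          refine Finset.mem_filter.2 ⟨Finset.mem_univ _, ?_⟩
          intro i hi
          have hne' : i ≠ i₀ := fun h => hi (h ▸ hi₀T)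
          rw [Function.update_of_ne hne']
          exact hp1 i (fun hiT' => hi (Finset.mem_of_mem_erase hiT'))
        · intro v hv
          dsimp only
          rw [Function.update_idem, Function.update_eq_self]
        · intro p hp
          rw [Finset.mem_product] at hp
          have hp1 := (Finset.mem_filter.1 hp.1).2
          have h1 : p.1 i₀ = w i₀ := hp1 i₀ (Finset.notMem_erase i₀ T)
          ext i
          · rw [Function.update_idem, ← h1, Function.update_eq_self]
          · rw [Function.update_self]
        · intro v hv
          dsimp only
          rw [Function.update_idem, Function.update_eq_self]
      rw [hre, Finset.sum_product]
      have hinner : ∀ u ∈ Finset.univ.filter (fun u : ι → α => ∀ i ∉ T', u i = w i),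
          (∑ x : α, ∏ i ∈ T, q i ((Function.update u i₀ x) i) (Function.update u i₀ x))
          = ∏ i ∈ T', q i (u i) u := by
        intro u hu
        have hnotparent : ∀ j i, E j i → i ∈ T → j ≠ i₀ := by
          intro j i hE hiT hj
          subst hj
          exact absurd (hmax i hiT) (not_le.2 (hτ _ _ hE))
        have hsplit : ∀ x : α, ∏ i ∈ T, q i ((Function.update u i₀ x) i) (Function.update u i₀ x)
            = q i₀ x u * ∏ i ∈ T', q i (u i) u := by
          intro x
          rw [← Finset.prod_erase_mul T _ hi₀T, mul_comm]
          congr 1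
          · rw [Function.update_self]
            refine hloc _ _ _ _ ?_
            intro j hE
            exact Function.update_of_ne (hnotparent j i₀ hE hi₀T) _ _
          · refine Finset.prod_congr rfl ?_
            intro i hi
            have hiT := Finset.mem_of_mem_erase hi
            have hne' : i ≠ i₀ := (Finset.mem_erase.1 hi).1
            rw [Function.update_of_ne hne']
            refine hloc _ _ _ _ ?_
            intro j hE
            exact Function.update_of_ne (hnotparent j i hE hiT) _ _
        simp only [hsplit]
        rw [← Finset.sum_mul, hsum, one_mul]
      rw [Finset.sum_congr rfl hinner]
      exact ih T' hssub w

/-- in a DAG `D` (edge relation `E`, with a topological order `τ`, so in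
particular every vertex of `S` precedes all of its descendants), for a density consistent
with `D` (conditionals `q`, each nonnegative and summing to `1`, depending only on parents),
the truncated factorization `∏_{i ∈ V'} q i (v_i | pa(v_i, D))` (with parent values in
agreement with `s`) defines a valid probability density over `V' = V \ S` for each fixed
`s`: it is nonnegative and sums to `1`. -/
theorem stmt_17 {ι α : Type*} [Fintype ι] [DecidableEq ι] [Fintype α] [DecidableEq α]
    (E : ι → ι → Prop)
    (q : ι → α → (ι → α) → ℝ)
    (hnn : ∀ i x v, 0 ≤ q i x v)
    (hsum : ∀ i v, ∑ x : α, q i x v = 1)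
    (hloc : ∀ i x v v', (∀ j, E j i → v j = v' j) → q i x v = q i x v')
    (τ : ι → ℕ) (hτinj : Function.Injective τ)
    (hτ : ∀ i j, E i j → τ i < τ j)
    (S : Finset ι) (s : ι → α) :
    (∀ v : ι → α, 0 ≤ ∏ i ∈ Sᶜ, q i (v i) v) ∧
    (∑ v ∈ Finset.univ.filter (fun v : ι → α => ∀ i ∈ S, v i = s i),
        ∏ i ∈ Sᶜ, q i (v i) v) = 1 := by
  constructor
  · intro v; exact Finset.prod_nonneg fun i _ => hnn i (v i) v
  · have := key_17 E q hsum hloc τ hτ Sᶜ s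
    have hfilt : (Finset.univ.filter (fun v : ι → α => ∀ i ∈ S, v i = s i))
        = Finset.univ.filter (fun v : ι → α => ∀ i ∉ Sᶜ, v i = s i) := by
      apply Finset.filter_congr
      intro v _
      simp [Finset.mem_compl]
    rw [hfilt]
    exact this
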